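/- arXiv:math/0310053 — 3 statements merged into one kernel-verified Lean document; each statement's English description precedes it below -/
import Mathlib

section
/- Let n be an even positive integer, n = 2m with m ≥ 2, and let k be an integer with 1 ≤ k ≤ 2m - 1, k^2 ≡ 1 (mod 2m), k ≢ 1 (mod 2m), and gcd(2m, k+1) = 2. Then k = m + 1. -/
theorem stmt_5 (m : ℕ) (hm : 2 ≤ m) (k : ℤ)
    (hk1 : 1 ≤ k) (hk2 : k ≤ 2 * (m : ℤ) - 1)
    (hsq : (2 * (m : ℤ)) ∣ k ^ 2 - 1)
    (hne : ¬ (2 * (m : ℤ)) ∣ k - 1)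
    (hgcd : Int.gcd (2 * (m : ℤ)) (k + 1) = 2) :
    k = (m : ℤ) + 1 := by
  have h2 : (2 : ℤ) ∣ k + 1 := by
    have h := Int.gcd_dvd_right (a := 2 * (m : ℤ)) (b := k + 1)
    rwa [hgcd] at h
  obtain ⟨b, hb⟩ := h2
  -- gcd m b = 1
  have hgcd2 : Int.gcd (2 * (m : ℤ)) (2 * b) = 2 := by rwa [hb] at hgcd
  have hco : IsCoprime (m : ℤ) b := by
    rw [Int.isCoprime_iff_gcd_eq_one]
    have : Int.gcd (2 * (m : ℤ)) (2 * b) = 2 * Int.gcd (m : ℤ) b := by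
      rw [Int.gcd_mul_left]
      norm_num
    omega
  -- m divides 2*(b-1)*b
  have hdvd : (m : ℤ) ∣ 2 * (b - 1) * b := by
    obtain ⟨c, hc⟩ := hsq
    refine ⟨c, ?_⟩
    have : k ^ 2 - 1 = (k - 1) * (k + 1) := by ring
    have hk1' : k - 1 = 2 * (b - 1) := by omega
    nlinarith [hc, this]
  have hdvd2 : (m : ℤ) ∣ 2 * (b - 1) :=
    (IsCoprime.dvd_of_dvd_mul_right hco) hdvd
  have hkm : (m : ℤ) ∣ k - 1 := by
    have : k - 1 = 2 * (b - 1) := by omega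
    rwa [this]
  obtain ⟨c, hc⟩ := hkm
  have hm' : (2 : ℤ) ≤ (m : ℤ) := by exact_mod_cast hm
  have hc0 : 0 ≤ c := by nlinarith
  have hc2 : c < 2 := by nlinarith
  interval_cases c <;> simp at hc
  · exact absurd (by rw [hc]; exact dvd_zero _ : (2*(m:ℤ)) ∣ k - 1) hne
  · omega
end

section
/- Let n be a positive integer and k_1, ..., k_m positive integers with each k_i < n, k_1 + ⋯ + k_m ≡ 0 (mod n), and gcd(n, k_1, ..., k_m) = 1. Then n = lcm(n/gcd(n,k_1), ..., n/gcd(n,k_m)), and moreover for each index i, n equals the lcm of the numbers n/gcd(n,k_j) for j ≠ i. -/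
theorem stmt_9 (n m : ℕ) (hn : 0 < n) (k : Fin m → ℕ)
    (hk : ∀ i, 0 < k i ∧ k i < n)
    (hsum : n ∣ ∑ i, k i)
    (hgcd : Nat.gcd n (Finset.univ.gcd k) = 1) :
    n = Finset.univ.lcm (fun i => n / Nat.gcd n (k i)) ∧
      ∀ i : Fin m, n = (Finset.univ.erase i).lcm (fun j => n / Nat.gcd n (k j)) := by
  set f : Fin m → ℕ := fun i => n / Nat.gcd n (k i) with hf
  have hfdvd : ∀ j, f j ∣ n := fun j => Nat.div_dvd_of_dvd (Nat.gcd_dvd_left _ _)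
  have key : ∀ i : Fin m, n ∣ (Finset.univ.erase i).lcm f := by
    intro i
    rw [Nat.dvd_iff_prime_pow_dvd_dvd]
    intro p a hp hpa
    rcases Nat.eq_zero_or_pos a with rfl | ha
    · simp
    have hp' : p.Prime := hp
    have hpn : p ∣ n := dvd_trans (dvd_pow_self p ha.ne') hpa
    by_cases hex : ∃ j ∈ Finset.univ.erase i, ¬ p ∣ k j
    · obtain ⟨j, hj, hpkj⟩ := hex
      have hcop : Nat.Coprime p (Nat.gcd n (k j)) :=
        (Nat.Prime.coprime_iff_not_dvd hp').mpr
          (fun h => hpkj (h.trans (Nat.gcd_dvd_right _ _)))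
      have hmul : Nat.gcd n (k j) * f j = n := Nat.mul_div_cancel' (Nat.gcd_dvd_left _ _)
      have hdvd : p ^ a ∣ f j := by
        refine (Nat.Coprime.pow_left a hcop).dvd_of_dvd_mul_left ?_
        rw [hmul]; exact hpa
      exact hdvd.trans (Finset.dvd_lcm hj)
    · push_neg at hex
      exfalso
      have hki : p ∣ k i := by
        have h1 : p ∣ ∑ j, k j := hpn.trans hsum
        have h2 : p ∣ ∑ j ∈ Finset.univ.erase i, k j :=
          Finset.dvd_sum (fun j hj => hex j hj)
        have h3 : k i + ∑ j ∈ Finset.univ.erase i, k j = ∑ j, k j :=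
          Finset.add_sum_erase _ _ (Finset.mem_univ i)
        exact (Nat.dvd_add_right h2).mp (by rwa [← h3, Nat.add_comm] at h1)
      have hall : ∀ j, p ∣ k j := by
        intro j
        by_cases hji : j = i
        · exact hji ▸ hki
        · exact hex j (Finset.mem_erase.mpr ⟨hji, Finset.mem_univ j⟩)
      have h1 : p ∣ 1 := hgcd ▸ Nat.dvd_gcd hpn (Finset.dvd_gcd fun j _ => hall j)
      exact hp'.one_lt.ne' (Nat.dvd_one.mp h1)
  have hlcm_dvd : ∀ s : Finset (Fin m), s.lcm f ∣ n :=
    fun s => Finset.lcm_dvd (fun j _ => hfdvd j)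
  constructor
  · rcases Nat.eq_zero_or_pos m with rfl | hm
    · simp only [Finset.univ_eq_empty, Finset.gcd_empty, Nat.gcd_zero_right] at hgcd
      simp [Finset.univ_eq_empty, hgcd]
    · obtain ⟨i⟩ := Fin.pos_iff_nonempty.mp hm
      refine Nat.dvd_antisymm ?_ (hlcm_dvd _)
      exact (key i).trans (Finset.lcm_dvd fun j _ => Finset.dvd_lcm (Finset.mem_univ j))
  · exact fun i => Nat.dvd_antisymm (key i) (hlcm_dvd _)
end

section
/- Let n = d·m with d ≥ 2, m ≥ 1. In the group G with presentation ⟨s, t, u | s^d = t^n = u^2 = [s,t] = [s,u] = 1, (ut)^2 = s^{-1}⟩, the element s is central, the subgroup ⟨s⟩ has order d, and G/⟨s⟩ is isomorphic to the dihedral group of order 2n. -/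
open scoped commutatorElement

/-- Relators for the presentation
`⟨s, t, u | s^d = t^n = u² = [s,t] = [s,u] = 1, (ut)² = s⁻¹⟩`,
with `s, t, u` the generators `0, 1, 2` of `Fin 3`. -/
def stmt18Rels (d n : ℕ) : Set (FreeGroup (Fin 3)) :=
  {FreeGroup.of (0 : Fin 3) ^ d, FreeGroup.of (1 : Fin 3) ^ n, FreeGroup.of (2 : Fin 3) ^ 2,
    ⁅FreeGroup.of (0 : Fin 3), FreeGroup.of (1 : Fin 3)⁆, ⁅FreeGroup.of (0 : Fin 3), FreeGroup.of (2 : Fin 3)⁆,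
    (FreeGroup.of (2 : Fin 3) * FreeGroup.of (1 : Fin 3)) ^ 2 * FreeGroup.of (0 : Fin 3)}

namespace Stmt18

theorem mk_eq_one {α : Type*} {rels : Set (FreeGroup α)} {r : FreeGroup α} (h : r ∈ rels) :
    PresentedGroup.mk rels r = 1 :=
  (QuotientGroup.eq_one_iff r).2 (Subgroup.subset_normalClosure h)

def cmap (d m : ℕ) : ZMod (d * m) →+* ZMod d :=
  ZMod.castHom (Dvd.intro m rfl) (ZMod d)

/-- Central extension `1 → ZMod d → K → D_{dm} → 1` serving as a concrete model. -/
structure K (d m : ℕ) where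
  a : ZMod d
  b : ZMod (d * m)
  e : Bool

namespace K

variable {d m : ℕ}

instance : Mul (K d m) :=
  ⟨fun x y => ⟨x.a + y.a + (if x.e then -(cmap d m y.b) else 0),
    x.b + (if x.e then -y.b else y.b), xor x.e y.e⟩⟩

instance : One (K d m) := ⟨⟨0, 0, false⟩⟩

instance : Inv (K d m) :=
  ⟨fun x => if x.e then ⟨-x.a + cmap d m x.b, x.b, true⟩ else ⟨-x.a, -x.b, false⟩⟩

@[simp] theorem mul_def (x y : K d m) :
    x * y = ⟨x.a + y.a + (if x.e then -(cmap d m y.b) else 0),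
      x.b + (if x.e then -y.b else y.b), xor x.e y.e⟩ := rfl

@[simp] theorem one_def : (1 : K d m) = ⟨0, 0, false⟩ := rfl

@[simp] theorem inv_def (x : K d m) :
    x⁻¹ = if x.e then ⟨-x.a + cmap d m x.b, x.b, true⟩ else ⟨-x.a, -x.b, false⟩ := rfl

instance : Group (K d m) where
  mul_assoc := by
    rintro ⟨a1, b1, e1⟩ ⟨a2, b2, e2⟩ ⟨a3, b3, e3⟩
    cases e1 <;> cases e2 <;> cases e3 <;>
      simp [K.mk.injEq, map_add, map_neg] <;> constructor <;> ring
  one_mul := by rintro ⟨a, b, e⟩; simp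
  mul_one := by rintro ⟨a, b, e⟩; cases e <;> simp
  inv_mul_cancel := by
    rintro ⟨a, b, e⟩
    cases e <;> simp [K.mk.injEq]

def sK : K d m := ⟨1, 0, false⟩
def tK : K d m := ⟨0, 1, false⟩
def uK : K d m := ⟨0, 0, true⟩

theorem sK_pow (k : ℕ) : (sK : K d m) ^ k = ⟨(k : ZMod d), 0, false⟩ := by
  induction k with
  | zero => simp
  | succ k ih => rw [pow_succ, ih]; simp [sK, K.mk.injEq]

theorem tK_pow (k : ℕ) : (tK : K d m) ^ k = ⟨0, (k : ZMod (d * m)), false⟩ := by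
  induction k with
  | zero => simp
  | succ k ih => rw [pow_succ, ih]; simp [tK, K.mk.injEq]

end K

open K in
/-- The images of the generators in `K`. -/
def fK (d m : ℕ) : Fin 3 → K d m := ![sK, tK, uK]

theorem fK_rels (d m : ℕ) :
    ∀ r ∈ stmt18Rels d (d * m), FreeGroup.lift (fK d m) r = 1 := by
  intro r hr
  simp only [stmt18Rels, Set.mem_insert_iff, Set.mem_singleton_iff] at hr
  rcases hr with rfl | rfl | rfl | rfl | rfl | rfl <;>
    simp only [map_pow, map_mul, map_commutatorElement, FreeGroup.lift_apply_of, fK,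
      Matrix.cons_val_zero, Matrix.cons_val_one, Matrix.head_cons, Matrix.cons_val_two,
      Matrix.tail_cons]
  · rw [K.sK_pow, ZMod.natCast_self]; rfl
  · rw [K.tK_pow, ZMod.natCast_self]; rfl
  · rw [pow_two]; simp [K.uK]
  · simp [commutatorElement_def, K.sK, K.tK, K.mk.injEq]
  · simp [commutatorElement_def, K.sK, K.uK, K.mk.injEq]
  · rw [pow_two]; simp [K.sK, K.tK, K.uK, K.mk.injEq]

/-- The images of the generators in the dihedral group. -/
def fD (d m : ℕ) : Fin 3 → DihedralGroup (d * m) :=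
  ![1, DihedralGroup.r 1, DihedralGroup.sr 0]

theorem fD_rels (d m : ℕ) :
    ∀ r ∈ stmt18Rels d (d * m), FreeGroup.lift (fD d m) r = 1 := by
  intro r hr
  simp only [stmt18Rels, Set.mem_insert_iff, Set.mem_singleton_iff] at hr
  rcases hr with rfl | rfl | rfl | rfl | rfl | rfl <;>
    simp only [map_pow, map_mul, map_commutatorElement, FreeGroup.lift_apply_of, fD,
      Matrix.cons_val_zero, Matrix.cons_val_one, Matrix.head_cons, Matrix.cons_val_two,
      Matrix.tail_cons]
  · simp
  · exact DihedralGroup.r_one_pow_n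
  · rw [pow_two, DihedralGroup.sr_mul_self]
  · simp [commutatorElement_def]
  · simp [commutatorElement_def]
  · rw [DihedralGroup.sr_mul_r, pow_two, DihedralGroup.sr_mul_self, one_mul]

end Stmt18

theorem stmt_18 (d m n : ℕ) (hd : 2 ≤ d) (hm : 1 ≤ m) (hn : n = d * m) :
    let G := PresentedGroup (stmt18Rels d n)
    let s : G := PresentedGroup.of (0 : Fin 3)
    Subgroup.zpowers s ≤ Subgroup.center G ∧
      Nat.card (Subgroup.zpowers s) = d ∧
      Nonempty ((G ⧸ Subgroup.normalClosure {s}) ≃* DihedralGroup n) := by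
  subst hn
  intro G s
  haveI : NeZero d := ⟨by omega⟩
  haveI : NeZero (d * m) := ⟨Nat.mul_ne_zero (by omega) (by omega)⟩
  haveI : Fact (1 < d * m) := ⟨lt_of_lt_of_le hd (Nat.le_mul_of_pos_right d hm)⟩
  set rels := stmt18Rels d (d * m) with hrels
  let t : G := PresentedGroup.of (1 : Fin 3)
  let u : G := PresentedGroup.of (2 : Fin 3)
  -- relator facts in G
  have hmem1 : FreeGroup.of (0 : Fin 3) ^ d ∈ rels := by simp [hrels, stmt18Rels]
  have hmem2 : FreeGroup.of (1 : Fin 3) ^ (d * m) ∈ rels := by simp [hrels, stmt18Rels]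
  have hmem3 : FreeGroup.of (2 : Fin 3) ^ 2 ∈ rels := by simp [hrels, stmt18Rels]
  have hmem4 : ⁅FreeGroup.of (0 : Fin 3), FreeGroup.of (1 : Fin 3)⁆ ∈ rels := by
    simp [hrels, stmt18Rels]
  have hmem5 : ⁅FreeGroup.of (0 : Fin 3), FreeGroup.of (2 : Fin 3)⁆ ∈ rels := by
    simp [hrels, stmt18Rels]
  have hmem6 : (FreeGroup.of (2 : Fin 3) * FreeGroup.of (1 : Fin 3)) ^ 2 *
      FreeGroup.of (0 : Fin 3) ∈ rels := by simp [hrels, stmt18Rels]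
  have hsd : s ^ d = 1 := by
    have := Stmt18.mk_eq_one hmem1
    rwa [map_pow] at this
  have htn : t ^ (d * m) = 1 := by
    have := Stmt18.mk_eq_one hmem2
    rwa [map_pow] at this
  have hu2 : u * u = 1 := by
    have := Stmt18.mk_eq_one hmem3
    rwa [pow_two, map_mul] at this
  have hst : Commute s t := by
    have := Stmt18.mk_eq_one hmem4
    rw [map_commutatorElement] at this
    exact commutatorElement_eq_one_iff_commute.1 this
  have hsu : Commute s u := by
    have := Stmt18.mk_eq_one hmem5
    rw [map_commutatorElement] at this
    exact commutatorElement_eq_one_iff_commute.1 this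
  have huts : (u * t) ^ 2 * s = 1 := by
    have := Stmt18.mk_eq_one hmem6
    rwa [map_mul, map_pow, map_mul] at this
  -- Part 1: s is central
  have hcentral : ∀ g : G, s * g = g * s := by
    intro g
    have hg : g ∈ Subgroup.centralizer {s} := by
      refine PresentedGroup.generated_by rels (Subgroup.centralizer {s}) (fun j => ?_) g
      refine Subgroup.mem_centralizer_iff.2 ?_
      rintro h rfl
      fin_cases j
      · rfl
      · exact hst.eq
      · exact hsu.eq
    exact (Subgroup.mem_centralizer_iff.1 hg s rfl)
  have part1 : Subgroup.zpowers s ≤ Subgroup.center G :=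
    Subgroup.zpowers_le.2 (Subgroup.mem_center_iff.2 fun g => (hcentral g).symm)
  -- Part 2: order of s is d
  let φ : G →* Stmt18.K d m := PresentedGroup.toGroup (Stmt18.fK_rels d m)
  have hφs : φ s = Stmt18.K.sK := by
    have h := PresentedGroup.toGroup.of (Stmt18.fK_rels d m) (x := (0 : Fin 3))
    simp only [Stmt18.fK, Matrix.cons_val_zero] at h
    exact h
  have horder : orderOf s = d := by
    have h1 : orderOf s ∣ d := orderOf_dvd_of_pow_eq_one hsd
    have h2 : d ∣ orderOf s := by
      have hk : (Stmt18.K.sK : Stmt18.K d m) ^ orderOf s = 1 := by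
        rw [← hφs, ← map_pow, pow_orderOf_eq_one, map_one]
      rw [Stmt18.K.sK_pow] at hk
      have : ((orderOf s : ℕ) : ZMod d) = 0 := congrArg Stmt18.K.a hk
      exact (ZMod.natCast_eq_zero_iff _ _).1 this
    exact Nat.dvd_antisymm h1 h2
  have part2 : Nat.card (Subgroup.zpowers s) = d := by
    rw [Nat.card_zpowers, horder]
  refine ⟨part1, part2, ?_⟩
  -- Part 3: quotient is dihedral
  let ψ : G →* DihedralGroup (d * m) := PresentedGroup.toGroup (Stmt18.fD_rels d m)
  have hψs : ψ s = 1 := by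
    have h := PresentedGroup.toGroup.of (Stmt18.fD_rels d m) (x := (0 : Fin 3))
    simp only [Stmt18.fD, Matrix.cons_val_zero] at h
    exact h
  have hψt : ψ t = DihedralGroup.r 1 := by
    have h := PresentedGroup.toGroup.of (Stmt18.fD_rels d m) (x := (1 : Fin 3))
    simp only [Stmt18.fD, Matrix.cons_val_one, Matrix.head_cons] at h
    exact h
  have hψu : ψ u = DihedralGroup.sr 0 := by
    have h := PresentedGroup.toGroup.of (Stmt18.fD_rels d m) (x := (2 : Fin 3))
    simp only [Stmt18.fD, Matrix.cons_val_two, Matrix.tail_cons, Matrix.head_cons] at h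
    exact h
  set N := Subgroup.normalClosure {s} with hN
  have hNker : N ≤ ψ.ker :=
    Subgroup.normalClosure_le_normal (by
      rintro x rfl
      exact MonoidHom.mem_ker.2 hψs)
  let ψbar : G ⧸ N →* DihedralGroup (d * m) :=
    QuotientGroup.lift N ψ fun x hx => MonoidHom.mem_ker.1 (hNker hx)
  let π : G →* G ⧸ N := QuotientGroup.mk' N
  set T : G ⧸ N := π t with hT
  set U : G ⧸ N := π u with hU
  have hSone : π s = 1 := (QuotientGroup.eq_one_iff s).2 (Subgroup.subset_normalClosure rfl)
  have hTn : T ^ (d * m) = 1 := by rw [hT, ← map_pow, htn, map_one]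
  have hU2 : U * U = 1 := by rw [hU, ← map_mul, hu2, map_one]
  have hUT2 : (U * T) * (U * T) = 1 := by
    have := congrArg π huts
    rw [map_mul, map_pow, map_mul, hSone, mul_one, map_one, pow_two] at this
    exact this
  have hUTU : U * T * U = T⁻¹ := by
    have h : (U * T * U) * T = 1 := by
      rw [mul_assoc (U * T) U T]; exact hUT2
    exact eq_inv_of_mul_eq_one_left h
  have hUinv : U⁻¹ = U := by
    rw [inv_eq_iff_mul_eq_one, hU2]
  have hconj : ∀ k : ℕ, U * T ^ k * U = (T ^ k)⁻¹ := by
    intro k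
    have := conj_pow (i := k) (a := U) (b := T)
    rw [hUinv] at this
    rw [← this, hUTU, inv_pow]
  have hswap : ∀ k : ℕ, T ^ k * U = U * (T ^ k)⁻¹ := by
    intro k
    rw [← hconj k, ← mul_assoc, ← mul_assoc, hU2, one_mul]
  have hc : ∀ k l : ℕ, T ^ k * (T ^ l)⁻¹ = (T ^ l)⁻¹ * T ^ k := fun k l =>
    ((Commute.refl T).pow_pow k l).inv_right.eq
  have hpow : ∀ i j : ZMod (d * m), T ^ (i + j).val = T ^ i.val * T ^ j.val := by
    intro i j
    rw [ZMod.val_add, ← pow_eq_pow_mod _ hTn, pow_add]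
  have hsub : ∀ i j : ZMod (d * m), T ^ (i - j).val = T ^ i.val * (T ^ j.val)⁻¹ := by
    intro i j
    have h := hpow (i - j) j
    rw [sub_add_cancel] at h
    rw [eq_mul_inv_iff_mul_eq, ← h]
  -- the inverse homomorphism
  let fDih : DihedralGroup (d * m) →* G ⧸ N :=
    { toFun := fun x => match x with
        | .r i => T ^ i.val
        | .sr i => U * T ^ i.val
      map_one' := by
        show T ^ (0 : ZMod (d * m)).val = 1
        rw [ZMod.val_zero, pow_zero]
      map_mul' := by
        rintro (i | i) (j | j)
        · show T ^ (i + j).val = T ^ i.val * T ^ j.val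
          exact hpow i j
        · show U * T ^ (j - i).val = T ^ i.val * (U * T ^ j.val)
          rw [hsub, ← mul_assoc (T ^ i.val) U, hswap i.val, mul_assoc U, hc j.val i.val]
        · show U * T ^ (i + j).val = (U * T ^ i.val) * T ^ j.val
          rw [hpow, mul_assoc]
        · show T ^ (j - i).val = (U * T ^ i.val) * (U * T ^ j.val)
          rw [hsub, mul_assoc, ← mul_assoc (T ^ i.val), hswap, ← mul_assoc, ← mul_assoc,
            hU2, one_mul, hc] }
  have hleft : ∀ q : G ⧸ N, fDih (ψbar q) = q := by
    have hcomp : fDih.comp ψbar = MonoidHom.id (G ⧸ N) := by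
      apply QuotientGroup.monoidHom_ext
      apply PresentedGroup.ext
      intro x
      fin_cases x
      · show fDih (ψ s) = π s
        rw [hψs, map_one, hSone]
      · show fDih (ψ t) = π t
        rw [hψt]
        show T ^ (1 : ZMod (d * m)).val = T
        rw [ZMod.val_one, pow_one]
      · show fDih (ψ u) = π u
        rw [hψu]
        show U * T ^ (0 : ZMod (d * m)).val = U
        rw [ZMod.val_zero, pow_zero, mul_one]
    intro q
    exact DFunLike.congr_fun hcomp q
  have hψbarT : ψbar T = DihedralGroup.r 1 := by
    show ψbar (π t) = _
    exact hψt
  have hψbarU : ψbar U = DihedralGroup.sr 0 := by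
    show ψbar (π u) = _
    exact hψu
  have hsurj : Function.Surjective ψbar := by
    rintro (i | i)
    · refine ⟨T ^ i.val, ?_⟩
      rw [map_pow, hψbarT, DihedralGroup.r_one_pow, ZMod.natCast_rightInverse i]
    · refine ⟨U * T ^ i.val, ?_⟩
      rw [map_mul, map_pow, hψbarT, hψbarU, DihedralGroup.r_one_pow,
        DihedralGroup.sr_mul_r, zero_add, ZMod.natCast_rightInverse i]
  exact ⟨MulEquiv.ofBijective ψbar
    ⟨Function.LeftInverse.injective hleft, hsurj⟩⟩
end
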